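/- Let p = (p_1, p̂) ∈ E_{2m} with p_1 ≠ 0, and let Ψ be an automorphism of the unit ball 𝔹^{n−1} ⊂ ℂ^{n−1} with Ψ(p̂) = 0. Then the map Φ(z_1, ẑ) = ( (|p_1|/p_1) · (1 − |p̂|²)^{1/(2m)} / (1 − ⟨ẑ, p̂⟩)^{1/m} · z_1 , Ψ(ẑ) ), where ⟨ẑ, p̂⟩ = z_2 p̄_2 + … + z_n p̄_n, |p̂|² = |p_2|² + … + |p_n|², and the complex power (1 − ⟨ẑ, p̂⟩)^{1/m} is taken with the principal branch (well defined since Re(1 − ⟨ẑ, p̂⟩) > 0 on E_{2m}), is an automorphism of E_{2m}, and Φ(p) = ( |p_1| (1 − |p̂|²)^{−1/(2m)}, 0, …, 0 ). -/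

import Mathlib

noncomputable section

/-- The pseudo-egg `E_{2m} ⊆ ℂ^n` with `n = k + 1`, written as `ℂ × ℂ^k`. -/
def E2m (k : ℕ) (m : ℝ) : Set (ℂ × (Fin k → ℂ)) :=
  {z | ‖z.1‖ ^ (2 * m) + ∑ j, ‖z.2 j‖ ^ 2 < 1}

/-- The open Euclidean unit ball `𝔹^k ⊆ ℂ^k`. -/
def euclBall (k : ℕ) : Set (Fin k → ℂ) :=
  {w | ∑ j, ‖w j‖ ^ 2 < 1}

/-- An automorphism of a domain `D`: a holomorphic bijection of `D` onto itself
whose inverse is holomorphic. -/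
def IsAutomorphismOf {X : Type*} [NormedAddCommGroup X] [NormedSpace ℂ X]
    (D : Set X) (F : X → X) : Prop :=
  DifferentiableOn ℂ F D ∧ Set.BijOn F D D ∧
    ∃ G : X → X, DifferentiableOn ℂ G D ∧
      (∀ z ∈ D, G (F z) = z) ∧ (∀ w ∈ D, F (G w) = w)

/-- The map `Φ(z₁, ẑ) = ( (|p₁|/p₁) (1−|p̂|²)^{1/(2m)} (1−⟨ẑ,p̂⟩)^{−1/m} z₁ , Ψ(ẑ) )`,
where `⟨ẑ,p̂⟩ = ∑ z_j p̄_j` and the complex power is the principal branch. -/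
def Phi (k : ℕ) (m : ℝ) (p : ℂ × (Fin k → ℂ)) (Ψ : (Fin k → ℂ) → (Fin k → ℂ))
    (z : ℂ × (Fin k → ℂ)) : ℂ × (Fin k → ℂ) :=
  (((‖p.1‖ : ℂ) / p.1) *
      (((1 - ∑ j, ‖p.2 j‖ ^ 2) ^ (1 / (2 * m)) : ℝ) : ℂ) /
      ((1 - ∑ j, z.2 j * (starRingEnd ℂ) (p.2 j)) ^ ((1 / m : ℝ) : ℂ)) * z.1,
    Ψ z.2)

namespace EggAux
open Complex
variable {k : ℕ}

def inn (z w : Fin k → ℂ) : ℂ := ∑ j, z j * (starRingEnd ℂ) (w j)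
def nsq (z : Fin k → ℂ) : ℝ := ∑ j, ‖z j‖ ^ 2

lemma nsq_nonneg (z : Fin k → ℂ) : 0 ≤ nsq z :=
  Finset.sum_nonneg fun _ _ => by positivity

lemma inn_self (z : Fin k → ℂ) : inn z z = (nsq z : ℂ) := by
  simp [inn, nsq, Complex.mul_conj, Complex.normSq_eq_norm_sq]

lemma inn_conj (z w : Fin k → ℂ) : inn w z = (starRingEnd ℂ) (inn z w) := by
  simp [inn, map_sum, map_mul, mul_comm]

lemma inn_add_left (x y w : Fin k → ℂ) : inn (x + y) w = inn x w + inn y w := by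
  simp [inn, add_mul, Finset.sum_add_distrib]

lemma inn_add_right (x y w : Fin k → ℂ) : inn w (x + y) = inn w x + inn w y := by
  simp [inn, map_add, mul_add, Finset.sum_add_distrib]

lemma inn_sub_left (x y w : Fin k → ℂ) : inn (x - y) w = inn x w - inn y w := by
  simp [inn, sub_mul, Finset.sum_sub_distrib]

lemma inn_sub_right (x y w : Fin k → ℂ) : inn w (x - y) = inn w x - inn w y := by
  simp [inn, map_sub, mul_sub, Finset.sum_sub_distrib]

lemma inn_smul_left (c : ℂ) (x w : Fin k → ℂ) : inn (c • x) w = c * inn x w := by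
  simp [inn, Finset.mul_sum, mul_assoc]

lemma inn_smul_right (c : ℂ) (x w : Fin k → ℂ) :
    inn x (c • w) = (starRingEnd ℂ) c * inn x w := by
  simp [inn, Finset.mul_sum]; ring_nf
  simp [mul_comm, mul_left_comm]

lemma inn_zero_left (w : Fin k → ℂ) : inn 0 w = 0 := by simp [inn]
lemma inn_zero_right (w : Fin k → ℂ) : inn w 0 = 0 := by simp [inn]
lemma nsq_zero' : nsq (0 : Fin k → ℂ) = 0 := by simp [nsq]

lemma nsq_eq_zero_iff {a : Fin k → ℂ} : nsq a = 0 ↔ a = 0 := by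
  constructor
  · intro h
    funext j
    have : ∀ i ∈ Finset.univ, (0:ℝ) ≤ ‖a i‖ ^ 2 := fun _ _ => by positivity
    have hj := (Finset.sum_eq_zero_iff_of_nonneg this).mp h j (Finset.mem_univ j)
    simpa using hj
  · intro h; subst h; simp [nsq]

lemma abs_inn_le (z w : Fin k → ℂ) :
    ‖inn z w‖ ≤ Real.sqrt (nsq z) * Real.sqrt (nsq w) := by
  have h := norm_inner_le_norm (𝕜 := ℂ) (E := EuclideanSpace ℂ (Fin k))
    ((WithLp.equiv 2 _).symm w) ((WithLp.equiv 2 _).symm z)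
  have h1 : (inner ℂ ((WithLp.equiv 2 _).symm w) ((WithLp.equiv 2 _).symm z) : ℂ) = inn z w := by
    simp [PiLp.inner_apply, inn, mul_comm]
  have h2 : ‖(WithLp.equiv 2 (Fin k → ℂ)).symm z‖ = Real.sqrt (nsq z) := by
    rw [EuclideanSpace.norm_eq]; simp [nsq]
  have h3 : ‖(WithLp.equiv 2 (Fin k → ℂ)).symm w‖ = Real.sqrt (nsq w) := by
    rw [EuclideanSpace.norm_eq]; simp [nsq]
  rw [h1, h2, h3] at h
  simpa [mul_comm] using h

lemma abs_inn_lt_one {z w : Fin k → ℂ} (hz : nsq z < 1) (hw : nsq w < 1) :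
    ‖inn z w‖ < 1 := by
  have h := abs_inn_le z w
  have h1 : Real.sqrt (nsq z) < 1 := by
    rw [show (1:ℝ) = Real.sqrt 1 by simp]
    exact Real.sqrt_lt_sqrt (nsq_nonneg z) hz
  have h2 : Real.sqrt (nsq w) ≤ 1 := by
    rw [show (1:ℝ) = Real.sqrt 1 by simp]
    exact Real.sqrt_le_sqrt hw.le
  nlinarith [Real.sqrt_nonneg (nsq z), Real.sqrt_nonneg (nsq w)]

lemma re_pos_of_ball {z w : Fin k → ℂ} (hz : nsq z < 1) (hw : nsq w < 1) :
    0 < (1 - inn z w).re := by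
  have h := abs_inn_lt_one hz hw
  simp only [Complex.sub_re, Complex.one_re]
  have : (inn z w).re ≤ ‖inn z w‖ :=
    (abs_le.mp (by simpa using Complex.abs_re_le_norm (inn z w))).2
  linarith

lemma one_sub_inn_ne_zero {z w : Fin k → ℂ} (hz : nsq z < 1) (hw : nsq w < 1) :
    1 - inn z w ≠ 0 := by
  intro h
  have := re_pos_of_ball hz hw
  rw [h] at this; simp at this

def mob (a z : Fin k → ℂ) : Fin k → ℂ := fun j =>
  ((1 - (1 - (Real.sqrt (1 - nsq a) : ℂ)) * (inn z a / inn a a)) * a j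
      - (Real.sqrt (1 - nsq a) : ℂ) * z j) / (1 - inn z a)

lemma mob_zero_left (z : Fin k → ℂ) : mob 0 z = -z := by
  funext j; simp [mob, inn_zero_right, nsq_zero']

set_option maxHeartbeats 1000000 in
private lemma scalar_key (s u V t α : ℂ) (hα : α = 1 - s ^ 2) :
    (α * (1 - u) * (α * (1 - V))
        - ((α - (1 - s) * u) * (α - (1 - s) * V) * α
          - (α - (1 - s) * u) * (s * α) * V
          - (s * α) * (α - (1 - s) * V) * u
          + (s * α) * (s * α) * t)) * ((1 - u) * (1 - V))
      = ((1 - α) * (1 - t)) * (α * (1 - u) * (α * (1 - V))) := by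
  subst hα; ring

section MobFacts
variable {a : Fin k → ℂ}

lemma inn_ne_zero_of_ne (ha0 : a ≠ 0) : inn a a ≠ 0 := by
  rw [inn_self]
  exact_mod_cast fun h => ha0 (nsq_eq_zero_iff.mp (by exact_mod_cast h))

lemma hs2_of (ha : nsq a < 1) :
    ((Real.sqrt (1 - nsq a) : ℂ)) ^ 2 = 1 - inn a a := by
  rw [inn_self]; norm_cast; rw [Real.sq_sqrt (by linarith)]

lemma conj_inn_self : (starRingEnd ℂ) (inn a a) = inn a a := by
  rw [inn_self]; exact Complex.conj_ofReal _

lemma mob_eq_scaled (ha0 : a ≠ 0) (z : Fin k → ℂ) (hz : 1 - inn z a ≠ 0) :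
    mob a z = ((inn a a)⁻¹ * (1 - inn z a)⁻¹) •
      ((inn a a - (1 - (Real.sqrt (1 - nsq a) : ℂ)) * inn z a) • a
        - ((Real.sqrt (1 - nsq a) : ℂ) * inn a a) • z) := by
  have hα : inn a a ≠ 0 := inn_ne_zero_of_ne ha0
  funext j
  simp only [mob, Pi.smul_apply, Pi.sub_apply, smul_eq_mul]
  field_simp

lemma inn_M (z w : Fin k → ℂ) :
    inn ((inn a a - (1 - (Real.sqrt (1 - nsq a) : ℂ)) * inn z a) • a
        - ((Real.sqrt (1 - nsq a) : ℂ) * inn a a) • z)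
      ((inn a a - (1 - (Real.sqrt (1 - nsq a) : ℂ)) * inn w a) • a
        - ((Real.sqrt (1 - nsq a) : ℂ) * inn a a) • w)
      = (inn a a - (1 - (Real.sqrt (1 - nsq a) : ℂ)) * inn z a)
          * (inn a a - (1 - (Real.sqrt (1 - nsq a) : ℂ)) * (starRingEnd ℂ) (inn w a)) * inn a a
        - (inn a a - (1 - (Real.sqrt (1 - nsq a) : ℂ)) * inn z a)
            * ((Real.sqrt (1 - nsq a) : ℂ) * inn a a) * (starRingEnd ℂ) (inn w a)
        - ((Real.sqrt (1 - nsq a) : ℂ) * inn a a)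
            * (inn a a - (1 - (Real.sqrt (1 - nsq a) : ℂ)) * (starRingEnd ℂ) (inn w a)) * inn z a
        + ((Real.sqrt (1 - nsq a) : ℂ) * inn a a) * ((Real.sqrt (1 - nsq a) : ℂ) * inn a a)
            * inn z w := by
  have hconjs : (starRingEnd ℂ) ((Real.sqrt (1 - nsq a) : ℂ)) = _ := Complex.conj_ofReal _
  rw [inn_sub_left, inn_sub_right, inn_sub_right, inn_smul_left, inn_smul_left,
    inn_smul_right, inn_smul_right, inn_smul_right, inn_smul_right, inn_smul_left,
    inn_smul_left]
  simp only [map_mul, map_sub, map_one, conj_inn_self, hconjs, Complex.conj_conj]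
  rw [show inn a w = (starRingEnd ℂ) (inn w a) from inn_conj w a]
  ring

set_option maxHeartbeats 1000000 in
lemma inn_mob (ha : nsq a < 1) (z w : Fin k → ℂ)
    (hz : 1 - inn z a ≠ 0) (hw : 1 - inn w a ≠ 0) :
    (1 - inn (mob a z) (mob a w)) * ((1 - inn z a) * (1 - (starRingEnd ℂ) (inn w a)))
      = (1 - inn a a) * (1 - inn z w) := by
  by_cases ha0 : a = 0
  · subst ha0
    rw [mob_zero_left, mob_zero_left, show -z = (-1 : ℂ) • z by funext j; simp,
      show -w = (-1 : ℂ) • w by funext j; simp, inn_smul_left, inn_smul_right]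
    simp [inn_zero_left, inn_zero_right]
  · have hα : inn a a ≠ 0 := inn_ne_zero_of_ne ha0
    have hwc : 1 - (starRingEnd ℂ) (inn w a) ≠ 0 := by
      intro h
      apply hw
      have := congrArg (starRingEnd ℂ) h
      simpa [map_sub, map_one, Complex.conj_conj] using this
    rw [mob_eq_scaled ha0 z hz, mob_eq_scaled ha0 w hw, inn_smul_left, inn_smul_right, inn_M]
    simp only [map_inv₀, map_mul, map_sub, map_one, conj_inn_self, Complex.conj_conj,
      Complex.conj_ofReal]
    set s : ℂ := (Real.sqrt (1 - nsq a) : ℂ) with hs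
    have hs2 : s ^ 2 = 1 - inn a a := hs2_of ha
    set α := inn a a
    set u := inn z a
    set V := (starRingEnd ℂ) (inn w a)
    set t := inn z w
    have hαeq : α = 1 - s ^ 2 := by linear_combination hs2
    set Q := (α - (1 - s) * u) * (α - (1 - s) * V) * α
          - (α - (1 - s) * u) * (s * α) * V
          - (s * α) * (α - (1 - s) * V) * u
          + (s * α) * (s * α) * t with hQ
    have key : (α * (1 - u) * (α * (1 - V)) - Q) * ((1 - u) * (1 - V))
        = ((1 - α) * (1 - t)) * (α * (1 - u) * (α * (1 - V))) := by
      rw [hQ, hαeq]; ring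
    field_simp
    exact mul_right_cancel₀ (mul_ne_zero hz hwc) (by linear_combination key)
end MobFacts
section MobFacts2
variable {a : Fin k → ℂ}

lemma inn_mob_a (z : Fin k → ℂ) (hz : 1 - inn z a ≠ 0) :
    inn (mob a z) a * (1 - inn z a) = inn a a - inn z a := by
  by_cases ha0 : a = 0
  · subst ha0; simp [inn_zero_right]
  · have hα : inn a a ≠ 0 := inn_ne_zero_of_ne ha0
    rw [mob_eq_scaled ha0 z hz, inn_smul_left, inn_sub_left, inn_smul_left, inn_smul_left]
    field_simp
    ring

lemma one_sub_inn_mob_a (ha : nsq a < 1) (z : Fin k → ℂ) (hz : 1 - inn z a ≠ 0) :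
    (1 - inn (mob a z) a) * (1 - inn z a) = 1 - inn a a := by
  have h := inn_mob_a (a := a) z hz
  linear_combination -h

lemma mob_mob (ha : nsq a < 1) {z : Fin k → ℂ} (hz : nsq z < 1) :
    mob a (mob a z) = z := by
  by_cases ha0 : a = 0
  · subst ha0; simp [mob_zero_left]
  · have hα : inn a a ≠ 0 := inn_ne_zero_of_ne ha0
    have hz1 : 1 - inn z a ≠ 0 := one_sub_inn_ne_zero hz ha
    set s : ℂ := (Real.sqrt (1 - nsq a) : ℂ) with hs
    have hs2 : s ^ 2 = 1 - inn a a := hs2_of ha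
    have hsne : s ≠ 0 := by
      rw [hs]
      exact_mod_cast (Real.sqrt_pos.mpr (by linarith)).ne'
    have h1s : (1:ℂ) - s ^ 2 ≠ 0 := by rw [hs2]; simpa using hα
    have hu' : inn (mob a z) a = (inn a a - inn z a) / (1 - inn z a) := by
      rw [← inn_mob_a z hz1]
      field_simp
    have hu'' : 1 - inn (mob a z) a = (1 - inn a a) / (1 - inn z a) := by
      rw [eq_div_iff hz1]
      exact one_sub_inn_mob_a ha z hz1
    have hαeq : inn a a = 1 - s ^ 2 := by linear_combination hs2
    funext j
    show ((1 - (1 - s) * (inn (mob a z) a / inn a a)) * a j - s * mob a z j)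
        / (1 - inn (mob a z) a) = z j
    rw [hu'', hu', show mob a z j
        = ((1 - (1 - s) * (inn z a / inn a a)) * a j - s * z j) / (1 - inn z a) from rfl,
      hαeq]
    have h1 : ((1:ℂ) - s ^ 2 - inn z a) / (1 - inn z a) / (1 - s ^ 2)
        = (1 - s ^ 2 - inn z a) / ((1 - inn z a) * (1 - s ^ 2)) := by
      rw [div_div]
    rw [h1]
    field_simp
    ring

lemma mob_zero_right (a : Fin k → ℂ) : mob a 0 = a := by
  funext j; simp [mob, inn_zero_left]

lemma mob_self (ha : nsq a < 1) : mob a a = 0 := by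
  by_cases ha0 : a = 0
  · subst ha0; simp [mob_zero_left]
  · have hα : inn a a ≠ 0 := inn_ne_zero_of_ne ha0
    funext j
    show ((1 - (1 - (Real.sqrt (1 - nsq a) : ℂ)) * (inn a a / inn a a)) * a j
        - (Real.sqrt (1 - nsq a) : ℂ) * a j) / (1 - inn a a) = 0
    rw [div_eq_zero_iff]
    left
    rw [div_self hα]
    ring

lemma nsq_mob (ha : nsq a < 1) {z : Fin k → ℂ} (hz : nsq z < 1) :
    (1 - nsq (mob a z)) * ‖1 - inn z a‖ ^ 2 = (1 - nsq a) * (1 - nsq z) := by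
  have hz1 : 1 - inn z a ≠ 0 := one_sub_inn_ne_zero hz ha
  have h := inn_mob ha z z hz1 hz1
  have habs : (1 - inn z a) * (1 - (starRingEnd ℂ) (inn z a))
      = ((‖1 - inn z a‖ ^ 2 : ℝ) : ℂ) := by
    rw [show (1:ℂ) - (starRingEnd ℂ) (inn z a) = (starRingEnd ℂ) (1 - inn z a) by
      rw [map_sub, map_one], Complex.mul_conj, Complex.normSq_eq_norm_sq]
  rw [habs, inn_self, inn_self, inn_self] at h
  exact_mod_cast h

lemma nsq_mob_lt_one (ha : nsq a < 1) {z : Fin k → ℂ} (hz : nsq z < 1) :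
    nsq (mob a z) < 1 := by
  have h := nsq_mob ha hz
  have hz1 : 1 - inn z a ≠ 0 := one_sub_inn_ne_zero hz ha
  have habs : 0 < ‖1 - inn z a‖ ^ 2 := by
    have := norm_pos_iff.mpr hz1
    positivity
  nlinarith

lemma nsq_smul (c : ℂ) (x : Fin k → ℂ) : nsq (c • x) = ‖c‖ ^ 2 * nsq x := by
  simp [nsq, Pi.smul_apply, smul_eq_mul, norm_mul, mul_pow, Finset.mul_sum]

lemma diff_inn_left (w : Fin k → ℂ) :
    Differentiable ℂ (fun z : Fin k → ℂ => inn z w) := by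
  apply Differentiable.fun_sum
  intro j _
  exact (differentiable_pi.mp differentiable_id j).mul_const _

lemma mob_diffOn (ha : nsq a < 1) :
    DifferentiableOn ℂ (mob a) {z : Fin k → ℂ | nsq z < 1} := by
  rw [differentiableOn_pi]
  intro j
  simp only [mob, div_eq_mul_inv]
  have h1 : DifferentiableOn ℂ (fun x : Fin k → ℂ => inn x a) {z : Fin k → ℂ | nsq z < 1} :=
    (diff_inn_left a).differentiableOn
  have hj : DifferentiableOn ℂ (fun x : Fin k → ℂ => x j) {z : Fin k → ℂ | nsq z < 1} :=
    (differentiable_pi.mp differentiable_id j).differentiableOn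
  exact ((((h1.mul_const _).const_mul _).const_sub _).mul_const _ |>.sub
      (hj.const_mul _)).mul
    (((differentiableOn_const _).sub h1).inv fun z hz => one_sub_inn_ne_zero hz ha)
end MobFacts2
lemma schwarz_ball {F : (Fin k → ℂ) → (Fin k → ℂ)}
    (hd : DifferentiableOn ℂ F {z : Fin k → ℂ | nsq z < 1})
    (hmaps : Set.MapsTo F {z : Fin k → ℂ | nsq z < 1} {z : Fin k → ℂ | nsq z < 1})
    (h0 : F 0 = 0) {z : Fin k → ℂ} (hz : nsq z < 1) : nsq (F z) ≤ nsq z := by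
  by_cases hz0 : z = 0
  · subst hz0; rw [h0]
  by_cases hFz : F z = 0
  · rw [hFz, nsq_zero']; exact nsq_nonneg z
  have hFzb : nsq (F z) < 1 := hmaps hz
  set r : ℝ := Real.sqrt (nsq z) with hr
  have hrsq : r ^ 2 = nsq z := Real.sq_sqrt (nsq_nonneg z)
  have hr0 : 0 < r := Real.sqrt_pos.mpr
    (lt_of_le_of_ne (nsq_nonneg z) (fun h => hz0 (nsq_eq_zero_iff.mp h.symm)))
  have hr1 : r < 1 := by nlinarith
  set T : ℝ := Real.sqrt (nsq (F z)) with hT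
  have hTsq : T ^ 2 = nsq (F z) := Real.sq_sqrt (nsq_nonneg _)
  have hT0 : 0 < T := Real.sqrt_pos.mpr
    (lt_of_le_of_ne (nsq_nonneg _) (fun h => hFz (nsq_eq_zero_iff.mp h.symm)))
  set e : Fin k → ℂ := ((r : ℂ))⁻¹ • z with he
  have hrne : ((r : ℂ)) ≠ 0 := by exact_mod_cast hr0.ne'
  have hre : ((r : ℂ)) • e = z := by
    rw [he, smul_smul, mul_inv_cancel₀ hrne, one_smul]
  have hnsqe : nsq e = 1 := by
    rw [he, nsq_smul, norm_inv, Complex.norm_real, Real.norm_eq_abs, abs_of_pos hr0]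
    field_simp [← hrsq]
    exact hrsq.symm
  have hmape : ∀ lam : ℂ, lam ∈ Metric.ball (0:ℂ) 1 → (lam • e) ∈ {z : Fin k → ℂ | nsq z < 1} := by
    intro lam hlam
    rw [Metric.mem_ball, dist_zero_right] at hlam
    have : nsq (lam • e) = ‖lam‖ ^ 2 * 1 := by rw [nsq_smul, hnsqe]
    simp only [Set.mem_setOf_eq, this, mul_one]
    calc ‖lam‖ ^ 2 < 1 ^ 2 := by
          apply pow_lt_pow_left₀ hlam (norm_nonneg lam)
          norm_num
      _ = 1 := one_pow 2
  set g : ℂ → ℂ := fun lam => inn (F (lam • e)) (F z) with hg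
  have hgd : DifferentiableOn ℂ g (Metric.ball (0:ℂ) 1) := by
    refine (diff_inn_left (F z)).comp_differentiableOn ?_
    refine hd.comp ((differentiable_id.smul_const e).differentiableOn) ?_
    exact fun lam hlam => hmape lam hlam
  have hg0 : g 0 = 0 := by
    rw [hg]; simp only [zero_smul, h0, inn_zero_left]
  have hgmaps : Set.MapsTo g (Metric.ball (0:ℂ) 1) (Metric.ball (g 0) T) := by
    intro lam hlam
    rw [hg0, Metric.mem_ball, Complex.dist_eq, sub_zero]
    have hFlam : nsq (F (lam • e)) < 1 := hmaps (hmape lam hlam)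
    have h1 : ‖inn (F (lam • e)) (F z)‖
        ≤ Real.sqrt (nsq (F (lam • e))) * Real.sqrt (nsq (F z)) := abs_inn_le _ _
    have h2 : Real.sqrt (nsq (F (lam • e))) < 1 := by
      rw [show (1:ℝ) = Real.sqrt 1 by simp]
      exact Real.sqrt_lt_sqrt (nsq_nonneg _) hFlam
    have h3 : (0:ℝ) ≤ Real.sqrt (nsq (F (lam • e))) := Real.sqrt_nonneg _
    calc ‖g lam‖ ≤ Real.sqrt (nsq (F (lam • e))) * T := h1
      _ < 1 * T := by exact mul_lt_mul_of_pos_right h2 hT0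
      _ = T := one_mul T
  have hrball : ((r : ℂ)) ∈ Metric.ball (0:ℂ) 1 := by
    rw [Metric.mem_ball, Complex.dist_eq, sub_zero, Complex.norm_real, Real.norm_eq_abs, abs_of_pos hr0]
    exact hr1
  have key := Complex.dist_le_div_mul_dist_of_mapsTo_ball hgd (hgmaps.mono_right Metric.ball_subset_closedBall) hrball
  rw [hg0, dist_zero_right, dist_zero_right] at key
  have hgr : g ((r:ℂ)) = ((nsq (F z) : ℝ) : ℂ) := by
    show inn (F (((r:ℂ)) • e)) (F z) = _
    rw [hre, inn_self]
  have hnorm : ‖g ((r:ℂ))‖ = nsq (F z) := by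
    rw [hgr, Complex.norm_real, Real.norm_eq_abs, _root_.abs_of_nonneg (nsq_nonneg _)]
  rw [hnorm, Complex.norm_real, Real.norm_eq_abs, _root_.abs_of_pos hr0, div_one] at key
  -- key : nsq (F z) ≤ T * r
  have hTr : T ≤ r := by nlinarith
  nlinarith

lemma schwarz_pick {F : (Fin k → ℂ) → (Fin k → ℂ)}
    (hd : DifferentiableOn ℂ F {z : Fin k → ℂ | nsq z < 1})
    (hmaps : Set.MapsTo F {z : Fin k → ℂ | nsq z < 1} {z : Fin k → ℂ | nsq z < 1})
    {a z : Fin k → ℂ} (ha : nsq a < 1) (hz : nsq z < 1) :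
    (1 - nsq a) * (1 - nsq z) * ‖1 - inn (F z) (F a)‖ ^ 2
      ≤ (1 - nsq (F a)) * (1 - nsq (F z)) * ‖1 - inn z a‖ ^ 2 := by
  have hFa : nsq (F a) < 1 := hmaps ha
  have hFz : nsq (F z) < 1 := hmaps hz
  set H : (Fin k → ℂ) → (Fin k → ℂ) := fun w => mob (F a) (F (mob a w)) with hH
  have hHd : DifferentiableOn ℂ H {z : Fin k → ℂ | nsq z < 1} := by
    refine (mob_diffOn hFa).comp ?_ ?_
    · exact hd.comp (mob_diffOn ha) (fun w hw => nsq_mob_lt_one ha hw)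
    · exact fun w hw => hmaps (nsq_mob_lt_one ha hw)
  have hHmaps : Set.MapsTo H {z : Fin k → ℂ | nsq z < 1} {z : Fin k → ℂ | nsq z < 1} :=
    fun w hw => nsq_mob_lt_one hFa (hmaps (nsq_mob_lt_one ha hw))
  have hH0 : H 0 = 0 := by
    rw [hH]
    simp only [mob_zero_right]
    exact mob_self hFa
  have hw : nsq (mob a z) < 1 := nsq_mob_lt_one ha hz
  have hkey := schwarz_ball hHd hHmaps hH0 hw
  have hHw : H (mob a z) = mob (F a) (F z) := by
    show mob (F a) (F (mob a (mob a z))) = _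
    rw [mob_mob ha hz]
  rw [hHw] at hkey
  -- hkey : nsq (mob (F a) (F z)) ≤ nsq (mob a z)
  have e1 := nsq_mob ha hz
  have e2 := nsq_mob hFa hFz
  have hA : 0 < ‖1 - inn z a‖ ^ 2 := by
    have := norm_pos_iff.mpr (one_sub_inn_ne_zero hz ha)
    positivity
  have hB : 0 < ‖1 - inn (F z) (F a)‖ ^ 2 := by
    have := norm_pos_iff.mpr (one_sub_inn_ne_zero hFz hFa)
    positivity
  nlinarith [mul_le_mul_of_nonneg_right hkey (mul_pos hA hB).le]

end EggAux

namespace EggAux2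
open Complex EggAux

lemma cpow_ne_zero' {d : ℂ} (hd : d ≠ 0) (w : ℂ) : d ^ w ≠ 0 := by
  rw [Complex.cpow_def_of_ne_zero hd]
  exact Complex.exp_ne_zero _

lemma abs_cpow_real' {d : ℂ} (hd : d ≠ 0) (r : ℝ) :
    ‖d ^ ((r : ℂ))‖ = ‖d‖ ^ r := by
  rw [Complex.norm_cpow_of_ne_zero hd]
  simp

lemma cancel1 (A p1 T T' D z1 : ℂ) (hA : A ≠ 0) (hp : p1 ≠ 0) (hD : D ≠ 0)
    (hT : T' * T = 1) : p1 / A * T' * D * (A / p1 * T / D * z1) = z1 := by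
  field_simp
  linear_combination z1 * hT

lemma cancel2 (A p1 T T' D z1 : ℂ) (hA : A ≠ 0) (hp : p1 ≠ 0) (hD : D ≠ 0)
    (hT : T' * T = 1) : A / p1 * T / D * (p1 / A * T' * D * z1) = z1 := by
  field_simp
  linear_combination z1 * hT

end EggAux2
open EggAux EggAux2

/-- For `p ∈ E_{2m}` with `p₁ ≠ 0` and `Ψ` an automorphism of `𝔹^{n-1}` with `Ψ(p̂) = 0`,
the map `Φ` is an automorphism of `E_{2m}` and `Φ(p) = (|p₁|(1−|p̂|²)^{−1/(2m)}, 0, …, 0)`. -/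
theorem statement3 (k : ℕ) (hk : 1 ≤ k) (m : ℝ) (hm0 : 0 < m) (hm : m < 1 / 2)
    (p : ℂ × (Fin k → ℂ)) (hp : p ∈ E2m k m) (hp1 : p.1 ≠ 0)
    (Ψ : (Fin k → ℂ) → (Fin k → ℂ)) (hΨ : IsAutomorphismOf (euclBall k) Ψ)
    (hΨp : Ψ p.2 = 0) :
    IsAutomorphismOf (E2m k m) (Phi k m p Ψ) ∧
      Phi k m p Ψ p =
        (((‖p.1‖ * (1 - ∑ j, ‖p.2 j‖ ^ 2) ^ (-(1 / (2 * m))) : ℝ) : ℂ),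
          0) := by
  obtain ⟨hΨd, hΨbij, Ψi, hΨiD, hGF, hFG⟩ := hΨ
  have hB : euclBall k = {z : Fin k → ℂ | nsq z < 1} := rfl
  rw [hB] at hΨd hΨbij hΨiD hGF hFG
  have hmne : m ≠ 0 := ne_of_gt hm0
  have hpE : ‖p.1‖ ^ (2*m) + nsq p.2 < 1 := hp
  have habsp : (0:ℝ) ≤ ‖p.1‖ ^ (2*m) := Real.rpow_nonneg (norm_nonneg _) _
  have hp2 : nsq p.2 < 1 := by linarith
  have ht₀ : (0:ℝ) < 1 - nsq p.2 := by
    have := nsq_nonneg p.2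
    linarith
  have hp2b : p.2 ∈ {z : Fin k → ℂ | nsq z < 1} := hp2
  have hΨmaps : Set.MapsTo Ψ {z : Fin k → ℂ | nsq z < 1} {z : Fin k → ℂ | nsq z < 1} :=
    hΨbij.mapsTo
  have hΨimaps : Set.MapsTo Ψi {z : Fin k → ℂ | nsq z < 1} {z : Fin k → ℂ | nsq z < 1} := by
    intro w hw
    obtain ⟨x, hx, hxw⟩ := hΨbij.surjOn hw
    rw [← hxw, hGF x hx]
    exact hx
  have h0b : (0 : Fin k → ℂ) ∈ {z : Fin k → ℂ | nsq z < 1} := by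
    show nsq (0 : Fin k → ℂ) < 1
    rw [nsq_zero']; norm_num
  have hΨi0 : Ψi 0 = p.2 := by rw [← hΨp, hGF p.2 hp2b]
  have hE2snd : ∀ z : ℂ × (Fin k → ℂ), z ∈ E2m k m → nsq z.2 < 1 := by
    intro z hz
    have hzE : ‖z.1‖ ^ (2*m) + nsq z.2 < 1 := hz
    have := Real.rpow_nonneg (norm_nonneg z.1) (2*m)
    linarith
  have hE2fst : ∀ z : ℂ × (Fin k → ℂ), z ∈ E2m k m →
      ‖z.1‖ ^ (2*m) < 1 - nsq z.2 := by
    intro z hz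
    have hzE : ‖z.1‖ ^ (2*m) + nsq z.2 < 1 := hz
    linarith
  have hPhiFst : ∀ z : ℂ × (Fin k → ℂ), (Phi k m p Ψ z).1
      = (‖p.1‖ : ℂ) / p.1 * (((1 - nsq p.2) ^ (1/(2*m)) : ℝ) : ℂ)
        / ((1 - inn z.2 p.2) ^ ((1/m : ℝ) : ℂ)) * z.1 := fun z => rfl
  have hPhiSnd : ∀ z : ℂ × (Fin k → ℂ), (Phi k m p Ψ z).2 = Ψ z.2 := fun z => rfl
  -- the |Phi₁|^{2m} formula
  have absPhi : ∀ z : ℂ × (Fin k → ℂ), nsq z.2 < 1 →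
      ‖(Phi k m p Ψ z).1‖ ^ (2*m)
        = ‖z.1‖ ^ (2*m) * (1 - nsq p.2) / ‖1 - inn z.2 p.2‖ ^ 2 := by
    intro z hz2
    have hd : (1 : ℂ) - inn z.2 p.2 ≠ 0 := one_sub_inn_ne_zero hz2 hp2
    have habs1 : ‖(Phi k m p Ψ z).1‖
        = (1 - nsq p.2) ^ (1/(2*m)) / ‖1 - inn z.2 p.2‖ ^ (1/m)
          * ‖z.1‖ := by
      rw [hPhiFst z]
      simp only [norm_mul, norm_div, Complex.norm_real, Real.norm_eq_abs, abs_norm, abs_cpow_real' hd]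
      rw [div_self (norm_ne_zero_iff.mpr hp1), one_mul,
        _root_.abs_of_nonneg (Real.rpow_nonneg ht₀.le _)]
    rw [habs1, Real.mul_rpow (by positivity) (norm_nonneg _),
      Real.div_rpow (Real.rpow_nonneg ht₀.le _) (Real.rpow_nonneg (norm_nonneg _) _),
      ← Real.rpow_mul ht₀.le, ← Real.rpow_mul (norm_nonneg _),
      show 1/(2*m) * (2*m) = (1:ℝ) by field_simp,
      show 1/m * (2*m) = ((2:ℕ):ℝ) by push_cast; field_simp,
      Real.rpow_one, Real.rpow_natCast]
    ring
  -- Schwarz–Pick consequences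
  have SP1 : ∀ z2 : Fin k → ℂ, nsq z2 < 1 →
      (1 - nsq p.2) * (1 - nsq z2)
        ≤ (1 - nsq (Ψ z2)) * ‖1 - inn z2 p.2‖ ^ 2 := by
    intro z2 hz2
    have h := schwarz_pick hΨd hΨmaps hp2 hz2
    rw [hΨp] at h
    simpa [inn_zero_right, nsq_zero'] using h
  have SP2 : ∀ w2 : Fin k → ℂ, nsq w2 < 1 →
      (1 - nsq w2) * ‖1 - inn (Ψi w2) p.2‖ ^ 2
        ≤ (1 - nsq p.2) * (1 - nsq (Ψi w2)) := by
    intro w2 hw2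
    have h := schwarz_pick hΨiD hΨimaps h0b hw2
    rw [hΨi0] at h
    simpa [inn_zero_right, nsq_zero'] using h
  -- Phi maps E2m into E2m
  have hPhiMem : ∀ z ∈ E2m k m, Phi k m p Ψ z ∈ E2m k m := by
    intro z hz
    have hz2 : nsq z.2 < 1 := hE2snd z hz
    have hd : (1 : ℂ) - inn z.2 p.2 ≠ 0 := one_sub_inn_ne_zero hz2 hp2
    have hD : (0:ℝ) < ‖1 - inn z.2 p.2‖ ^ 2 := by
      have := norm_pos_iff.mpr hd
      positivity
    have hΨb : nsq (Ψ z.2) < 1 := hΨmaps hz2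
    show ‖(Phi k m p Ψ z).1‖ ^ (2*m) + nsq ((Phi k m p Ψ z).2) < 1
    rw [hPhiSnd z, absPhi z hz2]
    have hsp := SP1 z.2 hz2
    have hzlt := hE2fst z hz
    have key : ‖z.1‖ ^ (2*m) * (1 - nsq p.2)
        < (1 - nsq (Ψ z.2)) * ‖1 - inn z.2 p.2‖ ^ 2 := by
      nlinarith [mul_lt_mul_of_pos_right hzlt ht₀]
    have h2 : ‖z.1‖ ^ (2*m) * (1 - nsq p.2) / ‖1 - inn z.2 p.2‖ ^ 2
        < 1 - nsq (Ψ z.2) := by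
      rw [div_lt_iff₀ hD]
      linarith
    linarith
  -- the inverse map
  set Ginv : ℂ × (Fin k → ℂ) → ℂ × (Fin k → ℂ) := fun w =>
    (p.1 / (‖p.1‖ : ℂ) * (((1 - nsq p.2) ^ (-(1/(2*m))) : ℝ) : ℂ)
      * ((1 - inn (Ψi w.2) p.2) ^ ((1/m : ℝ) : ℂ)) * w.1, Ψi w.2) with hGdef
  have hGFst : ∀ w : ℂ × (Fin k → ℂ), (Ginv w).1
      = p.1 / (‖p.1‖ : ℂ) * (((1 - nsq p.2) ^ (-(1/(2*m))) : ℝ) : ℂ)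
        * ((1 - inn (Ψi w.2) p.2) ^ ((1/m : ℝ) : ℂ)) * w.1 := fun w => rfl
  have hGSnd : ∀ w : ℂ × (Fin k → ℂ), (Ginv w).2 = Ψi w.2 := fun w => rfl
  have hT'T : (((1 - nsq p.2) ^ (-(1/(2*m))) : ℝ) : ℂ)
      * (((1 - nsq p.2) ^ (1/(2*m)) : ℝ) : ℂ) = 1 := by
    rw [← Complex.ofReal_mul, Real.rpow_neg ht₀.le,
      inv_mul_cancel₀ (ne_of_gt (Real.rpow_pos_of_pos ht₀ _))]
    simp
  have hApne : (‖p.1‖ : ℂ) ≠ 0 := by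
    simpa using norm_ne_zero_iff.mpr hp1
  -- |Ginv₁|^{2m} formula
  have absG : ∀ w : ℂ × (Fin k → ℂ), nsq w.2 < 1 →
      ‖(Ginv w).1‖ ^ (2*m)
        = ‖w.1‖ ^ (2*m) * ‖1 - inn (Ψi w.2) p.2‖ ^ 2
          / (1 - nsq p.2) := by
    intro w hw2
    have hΨiw : nsq (Ψi w.2) < 1 := hΨimaps hw2
    have hd : (1 : ℂ) - inn (Ψi w.2) p.2 ≠ 0 := one_sub_inn_ne_zero hΨiw hp2
    have habs1 : ‖(Ginv w).1‖
        = (1 - nsq p.2) ^ (-(1/(2*m))) * ‖1 - inn (Ψi w.2) p.2‖ ^ (1/m)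
          * ‖w.1‖ := by
      rw [hGFst w]
      simp only [norm_mul, norm_div, Complex.norm_real, Real.norm_eq_abs, abs_norm, abs_cpow_real' hd]
      rw [div_self (norm_ne_zero_iff.mpr hp1), one_mul,
        _root_.abs_of_nonneg (Real.rpow_nonneg ht₀.le _)]
    rw [habs1, Real.mul_rpow (by positivity) (norm_nonneg _),
      Real.mul_rpow (Real.rpow_nonneg ht₀.le _) (Real.rpow_nonneg (norm_nonneg _) _),
      ← Real.rpow_mul ht₀.le, ← Real.rpow_mul (norm_nonneg _),
      show -(1/(2*m)) * (2*m) = (-1:ℝ) by field_simp,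
      show 1/m * (2*m) = ((2:ℕ):ℝ) by push_cast; field_simp,
      Real.rpow_neg_one, Real.rpow_natCast]
    rw [div_eq_mul_inv]
    ring
  -- Ginv maps E2m into E2m
  have hGMem : ∀ w ∈ E2m k m, Ginv w ∈ E2m k m := by
    intro w hw
    have hw2 : nsq w.2 < 1 := hE2snd w hw
    have hΨiw : nsq (Ψi w.2) < 1 := hΨimaps hw2
    have hd : (1 : ℂ) - inn (Ψi w.2) p.2 ≠ 0 := one_sub_inn_ne_zero hΨiw hp2
    have hD : (0:ℝ) < ‖1 - inn (Ψi w.2) p.2‖ ^ 2 := by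
      have := norm_pos_iff.mpr hd
      positivity
    show ‖(Ginv w).1‖ ^ (2*m) + nsq ((Ginv w).2) < 1
    rw [hGSnd w, absG w hw2]
    have hsp := SP2 w.2 hw2
    have hwlt := hE2fst w hw
    have key : ‖w.1‖ ^ (2*m) * ‖1 - inn (Ψi w.2) p.2‖ ^ 2
        < (1 - nsq (Ψi w.2)) * (1 - nsq p.2) := by
      nlinarith [mul_lt_mul_of_pos_right hwlt hD]
    have h2 : ‖w.1‖ ^ (2*m) * ‖1 - inn (Ψi w.2) p.2‖ ^ 2 / (1 - nsq p.2)
        < 1 - nsq (Ψi w.2) := by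
      rw [div_lt_iff₀ ht₀]
      linarith
    linarith
  -- left inverse
  have hGΦ : ∀ z ∈ E2m k m, Ginv (Phi k m p Ψ z) = z := by
    intro z hz
    have hz2 : nsq z.2 < 1 := hE2snd z hz
    have hΨiΨ : Ψi (Ψ z.2) = z.2 := hGF z.2 hz2
    have hd : (1 : ℂ) - inn z.2 p.2 ≠ 0 := one_sub_inn_ne_zero hz2 hp2
    have hDne : ((1 : ℂ) - inn z.2 p.2) ^ ((1/m : ℝ) : ℂ) ≠ 0 := cpow_ne_zero' hd _
    refine Prod.ext ?_ ?_
    · rw [hGFst, hPhiSnd, hΨiΨ, hPhiFst]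
      exact cancel1 _ _ _ _ _ _ hApne hp1 hDne hT'T
    · rw [hGSnd, hPhiSnd, hΨiΨ]
  -- right inverse
  have hΦG : ∀ w ∈ E2m k m, Phi k m p Ψ (Ginv w) = w := by
    intro w hw
    have hw2 : nsq w.2 < 1 := hE2snd w hw
    have hΨiw : nsq (Ψi w.2) < 1 := hΨimaps hw2
    have hΨΨi : Ψ (Ψi w.2) = w.2 := hFG w.2 hw2
    have hd : (1 : ℂ) - inn (Ψi w.2) p.2 ≠ 0 := one_sub_inn_ne_zero hΨiw hp2
    have hDne : ((1 : ℂ) - inn (Ψi w.2) p.2) ^ ((1/m : ℝ) : ℂ) ≠ 0 := cpow_ne_zero' hd _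
    refine Prod.ext ?_ ?_
    · rw [hPhiFst, hGSnd, hGFst]
      exact cancel2 _ _ _ _ _ _ hApne hp1 hDne hT'T
    · rw [hPhiSnd, hGSnd, hΨΨi]
  -- differentiability of Phi
  have hinnDiff : Differentiable ℂ (fun z : ℂ × (Fin k → ℂ) => inn z.2 p.2) :=
    (diff_inn_left p.2).comp differentiable_snd
  have hdenomPhi : DifferentiableOn ℂ
      (fun z : ℂ × (Fin k → ℂ) => (1:ℂ) - inn z.2 p.2) (E2m k m) :=
    ((differentiable_const _).sub hinnDiff).differentiableOn
  have hslitPhi : ∀ z ∈ E2m k m, ((1:ℂ) - inn z.2 p.2) ∈ Complex.slitPlane := by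
    intro z hz
    exact Complex.mem_slitPlane_iff.mpr (Or.inl (re_pos_of_ball (hE2snd z hz) hp2))
  have hcpowPhi : DifferentiableOn ℂ
      (fun z : ℂ × (Fin k → ℂ) => ((1:ℂ) - inn z.2 p.2) ^ ((1/m : ℝ) : ℂ)) (E2m k m) :=
    hdenomPhi.cpow (differentiableOn_const _) hslitPhi
  have hdiffPhi : DifferentiableOn ℂ (Phi k m p Ψ) (E2m k m) := by
    have hrw : Phi k m p Ψ = fun z : ℂ × (Fin k → ℂ) =>
        ((‖p.1‖ : ℂ) / p.1 * (((1 - nsq p.2) ^ (1/(2*m)) : ℝ) : ℂ)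
          / ((1 - inn z.2 p.2) ^ ((1/m : ℝ) : ℂ)) * z.1, Ψ z.2) := rfl
    rw [hrw]
    refine DifferentiableOn.prodMk ?_ ?_
    · simp only [div_eq_mul_inv]
      refine DifferentiableOn.mul ?_ differentiable_fst.differentiableOn
      refine DifferentiableOn.mul (differentiableOn_const _) ?_
      refine DifferentiableOn.inv hcpowPhi ?_
      intro z hz
      exact cpow_ne_zero' (one_sub_inn_ne_zero (hE2snd z hz) hp2) _
    · exact hΨd.comp differentiable_snd.differentiableOn (fun z hz => hE2snd z hz)
  -- differentiability of Ginv
  have hdiffG : DifferentiableOn ℂ Ginv (E2m k m) := by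
    have hΨisnd : DifferentiableOn ℂ (fun z : ℂ × (Fin k → ℂ) => Ψi z.2) (E2m k m) :=
      hΨiD.comp differentiable_snd.differentiableOn (fun z hz => hE2snd z hz)
    have hinnG : DifferentiableOn ℂ
        (fun z : ℂ × (Fin k → ℂ) => (1:ℂ) - inn (Ψi z.2) p.2) (E2m k m) := by
      refine (differentiableOn_const _).sub ?_
      exact (diff_inn_left p.2).comp_differentiableOn hΨisnd
    have hcpowG : DifferentiableOn ℂ
        (fun z : ℂ × (Fin k → ℂ) => ((1:ℂ) - inn (Ψi z.2) p.2) ^ ((1/m : ℝ) : ℂ))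
        (E2m k m) := by
      refine hinnG.cpow (differentiableOn_const _) ?_
      intro z hz
      exact Complex.mem_slitPlane_iff.mpr
        (Or.inl (re_pos_of_ball (hΨimaps (hE2snd z hz)) hp2))
    rw [hGdef]
    refine DifferentiableOn.prodMk ?_ hΨisnd
    refine DifferentiableOn.mul ?_ differentiable_fst.differentiableOn
    exact (differentiableOn_const _).mul hcpowG
  refine ⟨⟨hdiffPhi, ⟨hPhiMem, ?_, ?_⟩, Ginv, hdiffG, hGΦ, hΦG⟩, ?_⟩
  · -- InjOn
    intro x hx y hy hxy
    rw [← hGΦ x hx, hxy, hGΦ y hy]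
  · -- SurjOn
    intro w hw
    exact ⟨Ginv w, hGMem w hw, hΦG w hw⟩
  · -- value at p
    have hd : (1 : ℂ) - inn p.2 p.2 = (((1 - nsq p.2 : ℝ)) : ℂ) := by
      rw [inn_self]
      push_cast
      ring
    refine Prod.ext ?_ ?_
    · rw [hPhiFst, hd]
      have hcp : ((((1 - nsq p.2 : ℝ)) : ℂ)) ^ ((1/m : ℝ) : ℂ)
          = (((1 - nsq p.2) ^ (1/m) : ℝ) : ℂ) := (Complex.ofReal_cpow ht₀.le _).symm
      rw [hcp]
      have hsub : (1 - nsq p.2) ^ (-(1/(2*m)))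
          = (1 - nsq p.2) ^ (1/(2*m)) / (1 - nsq p.2) ^ (1/m) := by
        rw [← Real.rpow_sub ht₀]
        congr 1
        field_simp
        ring
      show (‖p.1‖ : ℂ) / p.1 * (((1 - nsq p.2) ^ (1/(2*m)) : ℝ) : ℂ)
          / (((1 - nsq p.2) ^ (1/m) : ℝ) : ℂ) * p.1
        = ((‖p.1‖ * (1 - nsq p.2) ^ (-(1/(2*m))) : ℝ) : ℂ)
      rw [hsub]
      push_cast
      have h1 : (((1 - nsq p.2) ^ (1/m) : ℝ) : ℂ) ≠ 0 := by
        exact_mod_cast ne_of_gt (Real.rpow_pos_of_pos ht₀ _)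
      field_simp
    · show Ψ p.2 = 0
      exact hΨp
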